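/- arXiv:1703.09029 — 2 statements merged into one kernel-verified Lean document; each statement's English description precedes it below -/
import Mathlib

section
/- Let H ∈ ℂ^{N_r × N_s}, B ∈ ℂ^{N_s × N_b}, G ∈ ℂ^{N_d × N_r}, T̃ ∈ ℂ^{N_r × N_b}, σ_r > 0, and let Ψ_bar be a Hermitian positive semidefinite N_r × N_r matrix. Define Ψ := Ψ_bar + H B B^H H^H + σ_r² I_{N_r} and Ψ_k̄ := Ψ − H B B^H H^H = Ψ_bar + σ_r² I_{N_r} (both Hermitian positive definite). Suppose the N_b × N_b matrices M := B^H H^H Ψ^{-1} H B and T̃^H G^H G T̃ are invertible, and set F := T̃ B^H H^H Ψ^{-1}. Then, with destination noise variance normalized to 1, tr( I_{N_b} − B^H H^H F^H G^H (G F Ψ F^H G^H + I_{N_d})^{-1} G F H B ) = tr( ( I_{N_b} + B^H H^H Ψ_k̄^{-1} H B )^{-1} ) + tr( ( M^{-1} + T̃^H G^H G T̃ )^{-1} ). -/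
open Matrix
open scoped ComplexOrder

lemma psd_isUnit_posDef {n : Type*} [Fintype n] [DecidableEq n]
    {M : Matrix n n ℂ} (h : M.PosSemidef) (hu : IsUnit M) : M.PosDef := by
  refine ⟨h.1, fun x hx => ?_⟩
  rcases (h.2 x).lt_or_eq with hlt | heq
  · exact hlt
  · exfalso
    have h0 : M *ᵥ x = 0 := (h.dotProduct_mulVec_zero_iff x).mp (by
      simpa [dotProduct, mulVec, Finsupp.sum_fintype, Finset.mul_sum, mul_assoc] using heq.symm)
    have hinj := Matrix.mulVec_injective_iff_isUnit.mpr hu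
    exact hx (Finsupp.coe_eq_zero.mp (hinj (h0.trans (Matrix.mulVec_zero M).symm)))

/-- Woodbury-type identity for the first hop. -/
lemma aux1 {n m : Type*} [Fintype n] [Fintype m] [DecidableEq n] [DecidableEq m]
    (a : Matrix n m ℂ) (b : Matrix m n ℂ) (ψ ψk : Matrix n n ℂ)
    (hψ : IsUnit ψ.det) (hψk : IsUnit ψk.det) (hs : a * b = ψ - ψk) :
    (1 + b * (ψk⁻¹ * a))⁻¹ = 1 - b * (ψ⁻¹ * a) := by
  apply Matrix.inv_eq_right_inv
  have key : ψk⁻¹ * (a * b) * ψ⁻¹ = ψk⁻¹ - ψ⁻¹ := by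
    rw [hs, Matrix.mul_sub, Matrix.sub_mul, Matrix.mul_nonsing_inv_cancel_right _ _ hψ,
      Matrix.nonsing_inv_mul _ hψk, Matrix.one_mul]
  have key2 : b * (ψk⁻¹ * a) * (b * (ψ⁻¹ * a)) = b * (ψk⁻¹ * a) - b * (ψ⁻¹ * a) := by
    have e : b * (ψk⁻¹ * a) * (b * (ψ⁻¹ * a)) = b * ((ψk⁻¹ * (a * b) * ψ⁻¹) * a) := by
      simp only [Matrix.mul_assoc]
    rw [e, key, Matrix.sub_mul, Matrix.mul_sub]
  rw [Matrix.add_mul, Matrix.one_mul, Matrix.mul_sub, Matrix.mul_one, key2]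
  abel

/-- Woodbury identity for the second hop. -/
lemma aux2 {n m : Type*} [Fintype n] [Fintype m] [DecidableEq n] [DecidableEq m]
    (M0 : Matrix n n ℂ) (c : Matrix m n ℂ)
    (hM : IsUnit M0.det) (hW : IsUnit (c * M0 * cᴴ + 1).det) :
    (M0⁻¹ + cᴴ * c)⁻¹ = M0 - M0 * cᴴ * (c * M0 * cᴴ + 1)⁻¹ * (c * M0) := by
  apply Matrix.inv_eq_right_inv
  have key : (c * M0 * cᴴ + 1) * (c * M0 * cᴴ + 1)⁻¹ = 1 :=
    Matrix.mul_nonsing_inv _ hW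
  set W := (c * M0 * cᴴ + 1)⁻¹ with hWdef
  have key2 : cᴴ * c * (M0 * cᴴ * W * (c * M0)) = cᴴ * c * M0 - cᴴ * W * (c * M0) := by
    have e1 : cᴴ * c * (M0 * cᴴ * W * (c * M0))
        = cᴴ * ((c * M0 * cᴴ) * W) * (c * M0) := by
      simp only [Matrix.mul_assoc]
    have e2 : (c * M0 * cᴴ) * W = 1 - W := by
      have := key
      rw [Matrix.add_mul, Matrix.one_mul] at this
      linear_combination (norm := abel) this
    rw [e1, e2, Matrix.mul_sub, Matrix.mul_one, Matrix.sub_mul]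
    simp only [Matrix.mul_assoc]
  have hMm : M0⁻¹ * M0 = 1 := Matrix.nonsing_inv_mul _ hM
  have e3 : M0⁻¹ * (M0 * cᴴ * W * (c * M0)) = cᴴ * W * (c * M0) := by
    calc M0⁻¹ * (M0 * cᴴ * W * (c * M0)) = (M0⁻¹ * M0) * (cᴴ * (W * (c * M0))) := by
          simp only [Matrix.mul_assoc]
      _ = cᴴ * W * (c * M0) := by rw [hMm]; simp only [Matrix.one_mul, Matrix.mul_assoc]
  rw [Matrix.add_mul, Matrix.mul_sub, Matrix.mul_sub, hMm, e3, key2]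
  abel

/-- Theorem 2: for a relay matrix of the optimal structure `F = T̃ Bᴴ Hᴴ Ψ⁻¹`, the
MMSE of the k-th destination decomposes into the first-hop MSE plus a second-hop
term depending on `T̃`. -/
theorem mse_decomposition
    {Nr Ns Nb Nd : ℕ}
    (H : Matrix (Fin Nr) (Fin Ns) ℂ) (B : Matrix (Fin Ns) (Fin Nb) ℂ)
    (G : Matrix (Fin Nd) (Fin Nr) ℂ) (T : Matrix (Fin Nr) (Fin Nb) ℂ)
    (σr : ℝ) (hσr : 0 < σr)
    (Ψbar : Matrix (Fin Nr) (Fin Nr) ℂ) (hΨbar : Ψbar.PosSemidef)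
    (Ψ Ψk : Matrix (Fin Nr) (Fin Nr) ℂ)
    (hΨ : Ψ = Ψbar + H * B * Bᴴ * Hᴴ + ((σr ^ 2 : ℝ) : ℂ) • (1 : Matrix (Fin Nr) (Fin Nr) ℂ))
    (hΨk : Ψk = Ψbar + ((σr ^ 2 : ℝ) : ℂ) • (1 : Matrix (Fin Nr) (Fin Nr) ℂ))
    (M : Matrix (Fin Nb) (Fin Nb) ℂ) (hM : M = Bᴴ * Hᴴ * Ψ⁻¹ * H * B)
    (hMinv : IsUnit M) (hTinv : IsUnit (Tᴴ * Gᴴ * G * T))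
    (F : Matrix (Fin Nr) (Fin Nr) ℂ) (hF : F = T * Bᴴ * Hᴴ * Ψ⁻¹) :
    ((1 : Matrix (Fin Nb) (Fin Nb) ℂ)
        - Bᴴ * Hᴴ * Fᴴ * Gᴴ * (G * F * Ψ * Fᴴ * Gᴴ + 1)⁻¹ * G * F * H * B).trace
      = (((1 : Matrix (Fin Nb) (Fin Nb) ℂ) + Bᴴ * Hᴴ * Ψk⁻¹ * H * B)⁻¹).trace
        + ((M⁻¹ + Tᴴ * Gᴴ * G * T)⁻¹).trace := by
  -- positivity facts
  have hsm : (((σr ^ 2 : ℝ) : ℂ) • (1 : Matrix (Fin Nr) (Fin Nr) ℂ)).PosDef := by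
    rw [Matrix.smul_one_eq_diagonal]
    refine Matrix.posDef_diagonal_iff.mpr fun i => ?_
    exact_mod_cast (by positivity : (0:ℝ) < σr ^ 2)
  have hΨk_pd : Ψk.PosDef := by rw [hΨk]; exact Matrix.PosDef.posSemidef_add hΨbar hsm
  have hΨ_eq : Ψ = Ψk + H * B * Bᴴ * Hᴴ := by rw [hΨ, hΨk]; abel
  have hAA : (H * B * Bᴴ * Hᴴ).PosSemidef := by
    have := Matrix.posSemidef_self_mul_conjTranspose (H * B)
    simpa [Matrix.conjTranspose_mul, Matrix.mul_assoc] using this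
  have hΨ_pd : Ψ.PosDef := by rw [hΨ_eq]; exact hΨk_pd.add_posSemidef hAA
  have hdΨ : IsUnit Ψ.det := (Matrix.isUnit_iff_isUnit_det Ψ).mp hΨ_pd.isUnit
  have hdΨk : IsUnit Ψk.det := (Matrix.isUnit_iff_isUnit_det Ψk).mp hΨk_pd.isUnit
  have hΨiH : Ψ⁻¹ᴴ = Ψ⁻¹ := hΨ_pd.inv.isHermitian
  have hdM : IsUnit M.det := (Matrix.isUnit_iff_isUnit_det M).mp hMinv
  -- M is PSD
  have hM_psd : M.PosSemidef := by
    have := (hΨ_pd.inv.posSemidef).conjTranspose_mul_mul_same (H * B)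
    rw [hM]
    simpa [Matrix.conjTranspose_mul, Matrix.mul_assoc] using this
  -- the matrix C M Cᴴ + 1 is positive definite, hence invertible
  have hW_pd : ((G * T) * M * (G * T)ᴴ + 1).PosDef :=
    Matrix.PosDef.posSemidef_add (hM_psd.mul_mul_conjTranspose_same (G * T)) Matrix.PosDef.one
  have hdW : IsUnit ((G * T) * M * (G * T)ᴴ + 1).det :=
    (Matrix.isUnit_iff_isUnit_det _).mp hW_pd.isUnit
  -- reduce the big product using F = T Bᴴ Hᴴ Ψ⁻¹
  have hFH : Fᴴ = Ψ⁻¹ * (H * B) * Tᴴ := by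
    rw [hF]
    simp [Matrix.conjTranspose_mul, hΨiH, Matrix.mul_assoc]
  have hGFΨ : G * F * Ψ * Fᴴ * Gᴴ = (G * T) * M * (G * T)ᴴ := by
    rw [hFH, hF, hM]
    simp only [Matrix.conjTranspose_mul, Matrix.mul_assoc]
    rw [Matrix.nonsing_inv_mul_cancel_left _ _ hdΨ]
  have hBHF : Bᴴ * Hᴴ * Fᴴ * Gᴴ = M * (G * T)ᴴ := by
    rw [hFH, hM]
    simp only [Matrix.conjTranspose_mul, Matrix.mul_assoc]
  have hGFH : G * F * H * B = (G * T) * M := by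
    rw [hF, hM]
    simp only [Matrix.mul_assoc]
  -- first-hop identity
  have E1 : ((1 : Matrix (Fin Nb) (Fin Nb) ℂ) + Bᴴ * Hᴴ * Ψk⁻¹ * H * B)⁻¹ = 1 - M := by
    have hs : (H * B) * (Bᴴ * Hᴴ) = Ψ - Ψk := by
      rw [hΨ_eq]; simp only [Matrix.mul_assoc]; abel
    have := aux1 (H * B) (Bᴴ * Hᴴ) Ψ Ψk hdΨ hdΨk hs
    rw [hM]
    simpa [Matrix.mul_assoc] using this
  -- second-hop identity
  have E2 : (M⁻¹ + Tᴴ * Gᴴ * G * T)⁻¹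
      = M - M * (G * T)ᴴ * ((G * T) * M * (G * T)ᴴ + 1)⁻¹ * ((G * T) * M) := by
    have := aux2 M (G * T) hdM hdW
    simpa [Matrix.conjTranspose_mul, Matrix.mul_assoc] using this
  -- assemble
  have main : (1 : Matrix (Fin Nb) (Fin Nb) ℂ)
        - Bᴴ * Hᴴ * Fᴴ * Gᴴ * (G * F * Ψ * Fᴴ * Gᴴ + 1)⁻¹ * G * F * H * B
      = ((1 : Matrix (Fin Nb) (Fin Nb) ℂ) + Bᴴ * Hᴴ * Ψk⁻¹ * H * B)⁻¹
        + (M⁻¹ + Tᴴ * Gᴴ * G * T)⁻¹ := by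
    have hL : Bᴴ * Hᴴ * Fᴴ * Gᴴ * (G * F * Ψ * Fᴴ * Gᴴ + 1)⁻¹ * G * F * H * B
        = M * (G * T)ᴴ * ((G * T) * M * (G * T)ᴴ + 1)⁻¹ * ((G * T) * M) := by
      rw [hGFΨ]
      calc Bᴴ * Hᴴ * Fᴴ * Gᴴ * ((G * T) * M * (G * T)ᴴ + 1)⁻¹ * G * F * H * B
          = (Bᴴ * Hᴴ * Fᴴ * Gᴴ) * ((G * T) * M * (G * T)ᴴ + 1)⁻¹ * (G * F * H * B) := by
            simp only [Matrix.mul_assoc]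
        _ = M * (G * T)ᴴ * ((G * T) * M * (G * T)ᴴ + 1)⁻¹ * ((G * T) * M) := by
            rw [hBHF, hGFH]
    rw [hL, E1, E2]
    abel
  rw [main, Matrix.trace_add]
end

section
/- Let Ψ be a Hermitian positive definite N_r × N_r matrix, H ∈ ℂ^{N_r × N_s}, B ∈ ℂ^{N_s × N_b}, G ∈ ℂ^{N_d × N_r}, and T̃ ∈ ℂ^{N_r × N_b}. Set F := T̃ B^H H^H Ψ^{-1}, and assume the N_b × N_b matrices M := B^H H^H Ψ^{-1} H B and T̃^H G^H G T̃ are invertible. Then tr( B^H H^H ( Ψ F^H G^H G F Ψ + Ψ )^{-1} H B ) = tr( ( M^{-1} + T̃^H G^H G T̃ )^{-1} ). -/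
open Matrix
open scoped ComplexOrder

lemma posDef_of_posSemidef_isUnit {n : ℕ} {A : Matrix (Fin n) (Fin n) ℂ}
    (hA : A.PosSemidef) (hU : IsUnit A) : A.PosDef := by
  refine posDef_iff_dotProduct_mulVec.mpr ⟨hA.isHermitian, fun x hx => ?_⟩
  rcases (hA.dotProduct_mulVec_nonneg x).lt_or_eq with h | h
  · exact h
  · exfalso
    have h0 : A *ᵥ x = 0 := (hA.dotProduct_mulVec_zero_iff x).mp h.symm
    have hinj := Matrix.mulVec_injective_iff_isUnit.mpr hU
    exact hx (by simpa using hinj (h0.trans (Matrix.mulVec_zero A).symm))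

/-- Second-hop term computation in the proof of Theorem 2: substituting the
structured relay matrix `F = T̃ Bᴴ Hᴴ Ψ⁻¹` into the residual MSE term yields
`tr ((Bᴴ Hᴴ Ψ⁻¹ H B)⁻¹ + T̃ᴴ Gᴴ G T̃)⁻¹`. -/
theorem second_hop_mse_term
    {Nr Ns Nb Nd : ℕ}
    (Ψ : Matrix (Fin Nr) (Fin Nr) ℂ) (hΨ : Ψ.PosDef)
    (H : Matrix (Fin Nr) (Fin Ns) ℂ) (B : Matrix (Fin Ns) (Fin Nb) ℂ)
    (G : Matrix (Fin Nd) (Fin Nr) ℂ) (T : Matrix (Fin Nr) (Fin Nb) ℂ)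
    (F : Matrix (Fin Nr) (Fin Nr) ℂ) (hF : F = T * Bᴴ * Hᴴ * Ψ⁻¹)
    (M : Matrix (Fin Nb) (Fin Nb) ℂ) (hM : M = Bᴴ * Hᴴ * Ψ⁻¹ * H * B)
    (hMinv : IsUnit M) (hTinv : IsUnit (Tᴴ * Gᴴ * G * T)) :
    (Bᴴ * Hᴴ * (Ψ * Fᴴ * Gᴴ * G * F * Ψ + Ψ)⁻¹ * H * B).trace
      = ((M⁻¹ + Tᴴ * Gᴴ * G * T)⁻¹).trace := by
  set X : Matrix (Fin Nr) (Fin Nb) ℂ := H * B with hX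
  set K : Matrix (Fin Nb) (Fin Nb) ℂ := Tᴴ * Gᴴ * G * T with hK
  have hΨdet : IsUnit Ψ.det := (Matrix.isUnit_iff_isUnit_det _).mp hΨ.isUnit
  have hMdet : IsUnit M.det := (Matrix.isUnit_iff_isUnit_det _).mp hMinv
  have hΨinvH : (Ψ⁻¹)ᴴ = Ψ⁻¹ := hΨ.isHermitian.inv
  -- rewrite the inner matrix
  have hmat : Ψ * Fᴴ * Gᴴ * G * F * Ψ + Ψ = X * K * Xᴴ + Ψ := by
    subst hF
    simp only [Matrix.conjTranspose_mul, hΨinvH, conjTranspose_conjTranspose, hX, hK,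
      Matrix.mul_assoc]
    rw [Matrix.mul_nonsing_inv_cancel_left _ _ hΨdet,
      Matrix.nonsing_inv_mul _ hΨdet, Matrix.mul_one]
  have hMX : M = Xᴴ * Ψ⁻¹ * X := by
    rw [hM, hX, Matrix.conjTranspose_mul]; simp only [Matrix.mul_assoc]
  set P : Matrix (Fin Nr) (Fin Nr) ℂ := X * K * Xᴴ + Ψ with hP
  have hKPSD : K.PosSemidef := by
    have := Matrix.posSemidef_conjTranspose_mul_self (G * T)
    simpa [Matrix.conjTranspose_mul, Matrix.mul_assoc, hK] using this
  have hXKX : (X * K * Xᴴ).PosSemidef := by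
    have := hKPSD.mul_mul_conjTranspose_same X
    simpa [Matrix.mul_assoc] using this
  have hPpd : P.PosDef := Matrix.PosDef.posSemidef_add hXKX hΨ
  have hPdet : IsUnit P.det := (Matrix.isUnit_iff_isUnit_det _).mp hPpd.isUnit
  have hMpd : M.PosDef := by
    refine posDef_of_posSemidef_isUnit ?_ hMinv
    rw [hMX]
    exact hΨ.inv.posSemidef.conjTranspose_mul_mul_same X
  have hKpd : K.PosDef := posDef_of_posSemidef_isUnit hKPSD hTinv
  have hMKpd : (M⁻¹ + K).PosDef := Matrix.PosDef.add_posSemidef hMpd.inv hKpd.posSemidef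
  have hfac : (M⁻¹ + K) * M = 1 + K * M := by
    rw [Matrix.add_mul, Matrix.nonsing_inv_mul _ hMdet]
  have hU1 : IsUnit (1 + K * M) := hfac ▸ hMKpd.isUnit.mul hMinv
  have hU1det : IsUnit (1 + K * M).det := (Matrix.isUnit_iff_isUnit_det _).mp hU1
  have key1 : P * (Ψ⁻¹ * X * (1 + K * M)⁻¹) = X := by
    have h1 : P * (Ψ⁻¹ * X) = X * (1 + K * M) := by
      rw [hP, Matrix.add_mul, hMX]
      rw [Matrix.mul_nonsing_inv_cancel_left _ _ hΨdet]
      rw [Matrix.mul_add, Matrix.mul_one]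
      simp only [Matrix.mul_assoc]
      abel
    calc P * (Ψ⁻¹ * X * (1 + K * M)⁻¹) = (P * (Ψ⁻¹ * X)) * (1 + K * M)⁻¹ := by
          rw [← Matrix.mul_assoc]
      _ = X * ((1 + K * M) * (1 + K * M)⁻¹) := by rw [h1, Matrix.mul_assoc]
      _ = X := by rw [Matrix.mul_nonsing_inv _ hU1det, Matrix.mul_one]
  have hPX : P⁻¹ * X = Ψ⁻¹ * X * (1 + K * M)⁻¹ := by
    nth_rewrite 1 [← key1]
    rw [← Matrix.mul_assoc, Matrix.nonsing_inv_mul _ hPdet, Matrix.one_mul]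
  have key2 : Xᴴ * P⁻¹ * X = M * (1 + K * M)⁻¹ := by
    rw [Matrix.mul_assoc, hPX, hMX]
    simp only [Matrix.mul_assoc]
  have key3 : (M⁻¹ + K)⁻¹ = M * (1 + K * M)⁻¹ := by
    apply Matrix.inv_eq_right_inv
    rw [← Matrix.mul_assoc, hfac, Matrix.mul_nonsing_inv _ hU1det]
  rw [hmat, key3, ← key2]
  congr 1
  rw [hX, Matrix.conjTranspose_mul]
  simp only [Matrix.mul_assoc]
end
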